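/- Fix p, q > 1 and x ∈ (0,1). The function k ↦ (arsinh_{p,q}(x^k))^{1/k} is increasing on (0,∞). -/

import Mathlib

open Real Set

noncomputable def arsinhpq (p q x : ℝ) : ℝ :=
  ∫ t in (0:ℝ)..x, (1 + t ^ q) ^ (-1/p)

section aux

variable {p q : ℝ}

lemma aux_contOn (hq : 0 < q) :
    ContinuousOn (fun t : ℝ => (1 + t ^ q) ^ (-1/p)) (Ici 0) := by
  intro t ht
  have h1 : ContinuousAt (fun t : ℝ => 1 + t ^ q) t :=
    continuousAt_const.add (Real.continuousAt_rpow_const t q (Or.inr hq.le))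
  have h2 : (0:ℝ) < 1 + t ^ q := by
    have := Real.rpow_nonneg (mem_Ici.mp ht) q
    linarith
  exact (h1.rpow_const (Or.inl h2.ne')).continuousWithinAt

lemma aux_intble (hq : 0 < q) {b : ℝ} (hb : 0 ≤ b) :
    IntervalIntegrable (fun t : ℝ => (1 + t ^ q) ^ (-1/p)) MeasureTheory.volume 0 b := by
  apply ContinuousOn.intervalIntegrable
  rw [Set.uIcc_of_le hb]
  exact (aux_contOn hq).mono (Icc_subset_Ici_self)

lemma aux_pos (hp : 1 < p) (hq : 1 < q) {a : ℝ} (ha : 0 < a) : 0 < arsinhpq p q a := by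
  apply intervalIntegral.intervalIntegral_pos_of_pos_on (aux_intble (lt_trans one_pos hq) ha.le)
    _ ha
  intro s hs
  have h2 : (0:ℝ) < 1 + s ^ q := by
    have := Real.rpow_nonneg hs.1.le q
    linarith
  exact Real.rpow_pos_of_pos h2 _

lemma aux_le (hp : 1 < p) (hq : 1 < q) {a : ℝ} (ha : 0 ≤ a) : arsinhpq p q a ≤ a := by
  have h := intervalIntegral.integral_mono_on ha
    (aux_intble (lt_trans one_pos hq) ha) (intervalIntegrable_const (c := (1:ℝ)))
    (fun s hs => by
      apply Real.rpow_le_one_of_one_le_of_nonpos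
      · have := Real.rpow_nonneg hs.1 q
        linarith
      · have hp0 : 0 < p := lt_trans one_pos hp
        have h1p : 0 ≤ 1 / p := by positivity
        rw [neg_div]
        exact neg_nonpos.mpr h1p)
  simpa [arsinhpq] using h

lemma aux_key (hp : 1 < p) (hq : 1 < q) {a r : ℝ} (ha : a ∈ Ioo (0:ℝ) 1) (hr : 1 ≤ r) :
    arsinhpq p q a ^ r ≤ arsinhpq p q (a ^ r) := by
  set f : ℝ → ℝ := fun t => (1 + t ^ q) ^ (-1/p) with hf
  set c : ℝ := a ^ (r - 1) with hcdef
  have hq0 : (0:ℝ) < q := lt_trans one_pos hq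
  have hc0 : 0 < c := Real.rpow_pos_of_pos ha.1 _
  have hc1 : c ≤ 1 := Real.rpow_le_one ha.1.le ha.2.le (by linarith)
  have har : a ^ r = c * a := by
    rw [hcdef, Real.rpow_sub ha.1, Real.rpow_one, div_mul_cancel₀ _ ha.1.ne']
  -- F(c*a) = c * ∫ s in 0..a, f (c*s)
  have hsub : arsinhpq p q (c * a) = c * ∫ s in (0:ℝ)..a, f (c * s) := by
    rw [intervalIntegral.integral_comp_mul_left f hc0.ne']
    simp only [mul_zero, smul_eq_mul]
    rw [arsinhpq]
    field_simp
    simp only [hf, neg_div]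
  -- pointwise: f s ≤ f (c*s) on [0,a]
  have hmono : ∫ s in (0:ℝ)..a, f s ≤ ∫ s in (0:ℝ)..a, f (c * s) := by
    apply intervalIntegral.integral_mono_on ha.1.le (aux_intble hq0 ha.1.le)
    · apply ContinuousOn.intervalIntegrable
      rw [Set.uIcc_of_le ha.1.le]
      exact (aux_contOn hq0).comp ((continuous_const.mul continuous_id).continuousOn)
        (fun s hs => mul_nonneg hc0.le hs.1)
    · intro s hs
      have hcs0 : 0 ≤ c * s := mul_nonneg hc0.le hs.1
      have hcs : c * s ≤ s := by nlinarith [hs.1]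
      have h1 : (c*s) ^ q ≤ s ^ q := Real.rpow_le_rpow hcs0 hcs hq0.le
      have h2 : (0:ℝ) < 1 + (c*s) ^ q := by
        have := Real.rpow_nonneg hcs0 q
        linarith
      exact Real.rpow_le_rpow_of_nonpos h2 (by linarith)
        (by rw [neg_div]; simp [div_nonneg, (lt_trans one_pos hp).le])
  have hFpos : 0 < arsinhpq p q a := aux_pos hp hq ha.1
  have hFle : arsinhpq p q a ≤ a := aux_le hp hq ha.1.le
  calc arsinhpq p q a ^ r = arsinhpq p q a ^ (r - 1) * arsinhpq p q a := by
        rw [Real.rpow_sub hFpos, Real.rpow_one, div_mul_cancel₀ _ hFpos.ne']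
    _ ≤ c * arsinhpq p q a := by
        apply mul_le_mul_of_nonneg_right _ hFpos.le
        exact Real.rpow_le_rpow hFpos.le hFle (by linarith)
    _ ≤ c * ∫ s in (0:ℝ)..a, f (c * s) := by
        apply mul_le_mul_of_nonneg_left _ hc0.le
        exact hmono.trans_eq' rfl
    _ = arsinhpq p q (c * a) := hsub.symm
    _ = arsinhpq p q (a ^ r) := by rw [har]

end aux

theorem stmt7 (p q x : ℝ) (hp : 1 < p) (hq : 1 < q) (hx : x ∈ Ioo (0:ℝ) 1) :
    MonotoneOn (fun k : ℝ => (arsinhpq p q (x ^ k)) ^ (1/k)) (Ioi 0) := by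
  intro k₁ hk₁ k₂ hk₂ hk
  simp only [mem_Ioi] at hk₁ hk₂
  have ha : x ^ k₁ ∈ Ioo (0:ℝ) 1 :=
    ⟨Real.rpow_pos_of_pos hx.1 _, Real.rpow_lt_one hx.1.le hx.2 hk₁⟩
  have hr : 1 ≤ k₂ / k₁ := (one_le_div hk₁).2 hk
  have har : (x ^ k₁) ^ (k₂ / k₁) = x ^ k₂ := by
    rw [← Real.rpow_mul hx.1.le]
    congr 1
    field_simp
  have hkey := aux_key hp hq ha hr
  rw [har] at hkey
  have hF1pos : 0 < arsinhpq p q (x ^ k₁) := aux_pos hp hq ha.1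
  have heq : arsinhpq p q (x ^ k₁) ^ (1/k₁)
      = (arsinhpq p q (x ^ k₁) ^ (k₂ / k₁)) ^ (1/k₂) := by
    rw [← Real.rpow_mul hF1pos.le]
    congr 1
    field_simp
  show arsinhpq p q (x ^ k₁) ^ (1/k₁) ≤ arsinhpq p q (x ^ k₂) ^ (1/k₂)
  rw [heq]
  exact Real.rpow_le_rpow (Real.rpow_nonneg hF1pos.le _) hkey (by positivity)
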